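/- Let q_X, q_Y : (0,1) → ℝ be continuous, strictly increasing, integrable quantile functions with means m_X = ∫_0^1 q_X, m_Y = ∫_0^1 q_Y, Expected Shortfalls ES_X(p) = (1−p)^{-1}∫_p^1 q_X, ES_Y(p) = (1−p)^{-1}∫_p^1 q_Y, and θ-indices θ_X(p) = (1−p)(ES_X(p) − q_X(p))/(q_X(p) − m_X), θ_Y(p) defined analogously. Let D = {p ∈ (0,1) : q_X(p) > m_X and q_Y(p) > m_Y}. Then θ_X(p) ≤ θ_Y(p) for all p ∈ D if and only if the right-spread ratio p ↦ (ES_Y(p) − m_Y)/(ES_X(p) − m_X) is monotone nondecreasing on D. -/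

import Mathlib

open MeasureTheory Set

/-- FTC derivative of `x ↦ ∫_x^1 q - (1-x)m`. -/
lemma aux_hasDerivAt_T (q : ℝ → ℝ) (hc : ContinuousOn q (Set.Ioo 0 1))
    (hi : IntervalIntegrable q volume 0 1) (m : ℝ) {p : ℝ} (hp : p ∈ Set.Ioo (0:ℝ) 1) :
    HasDerivAt (fun x => (∫ u in x..1, q u) - (1 - x) * m) (m - q p) p := by
  have hsub : Set.uIcc p 1 ⊆ Set.uIcc (0:ℝ) 1 := by
    rw [Set.uIcc_of_le hp.2.le, Set.uIcc_of_le (zero_le_one' ℝ)]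
    exact Set.Icc_subset_Icc hp.1.le le_rfl
  have h1 : IntervalIntegrable q volume p 1 := hi.mono_set hsub
  have hmeas : StronglyMeasurableAtFilter q (nhds p) volume :=
    hc.stronglyMeasurableAtFilter isOpen_Ioo p hp
  have hca : ContinuousAt q p := hc.continuousAt (isOpen_Ioo.mem_nhds hp)
  have hI : HasDerivAt (fun x => ∫ u in x..1, q u) (-q p) p :=
    intervalIntegral.integral_hasDerivAt_left h1 hmeas hca
  have h2 : HasDerivAt (fun x => (1 - x) * m) ((-1) * m) p :=
    ((hasDerivAt_id p).const_sub 1).mul_const m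
  have := (hI.sub h2 : HasDerivAt (fun x => (∫ u in x..1, q u) - (1 - x) * m) _ p)
  exact this.congr_deriv (by ring)

/-- Positivity of `T` on the domain. -/
lemma aux_T_pos (q : ℝ → ℝ) (hm : StrictMonoOn q (Set.Ioo 0 1))
    (hi : IntervalIntegrable q volume 0 1) (m : ℝ) {p : ℝ} (hp : p ∈ Set.Ioo (0:ℝ) 1)
    (hq : m < q p) : 0 < (∫ u in p..1, q u) - (1 - p) * m := by
  have hsub : Set.uIcc p 1 ⊆ Set.uIcc (0:ℝ) 1 := by
    rw [Set.uIcc_of_le hp.2.le, Set.uIcc_of_le (zero_le_one' ℝ)]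
    exact Set.Icc_subset_Icc hp.1.le le_rfl
  have h1 : IntervalIntegrable q volume p 1 := hi.mono_set hsub
  have h2 : IntervalIntegrable (fun u => q u - m) volume p 1 :=
    h1.sub (intervalIntegrable_const)
  have hpos : 0 < ∫ u in p..1, (q u - m) := by
    refine intervalIntegral.intervalIntegral_pos_of_pos_on h2 ?_ hp.2
    intro x hx
    have hx1 : x ∈ Set.Ioo (0:ℝ) 1 := ⟨hp.1.trans hx.1, hx.2⟩
    have : q p < q x := hm hp hx1 hx.1
    linarith
  have : (∫ u in p..1, (q u - m)) = (∫ u in p..1, q u) - (1 - p) * m := by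
    rw [intervalIntegral.integral_sub h1 intervalIntegrable_const,
      intervalIntegral.integral_const, smul_eq_mul]
  linarith [this ▸ hpos]

/-- A function monotone on an open set has nonnegative derivative there. -/
lemma aux_deriv_nonneg_of_monotoneOn {f : ℝ → ℝ} {s : Set ℝ} (hs : IsOpen s)
    (hf : MonotoneOn f s) {p : ℝ} (hp : p ∈ s) {d : ℝ} (hd : HasDerivAt f d p) : 0 ≤ d := by
  have ht := hasDerivAt_iff_tendsto_slope.1 hd
  refine ge_of_tendsto ht ?_
  have hnb : s ∈ nhds p := hs.mem_nhds hp
  filter_upwards [self_mem_nhdsWithin, nhdsWithin_le_nhds hnb] with y hy hys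
  have hyne : y ≠ p := hy
  rw [slope_def_field]
  rcases lt_or_gt_of_ne hyne with h | h
  · apply div_nonneg_iff.mpr
    refine Or.inr ⟨?_, ?_⟩
    · simpa [sub_nonpos] using hf hys hp h.le
    · linarith
  · apply div_nonneg
    · simpa [sub_nonneg] using hf hp hys h.le
    · linarith

theorem theta_order_iff_right_spread_ratio_monotone
    (qX qY : ℝ → ℝ)
    (hXc : ContinuousOn qX (Set.Ioo 0 1)) (hXm : StrictMonoOn qX (Set.Ioo 0 1))
    (hXi : IntervalIntegrable qX volume 0 1)
    (hYc : ContinuousOn qY (Set.Ioo 0 1)) (hYm : StrictMonoOn qY (Set.Ioo 0 1))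
    (hYi : IntervalIntegrable qY volume 0 1)
    (mX mY : ℝ) (hmX : mX = ∫ u in (0:ℝ)..1, qX u) (hmY : mY = ∫ u in (0:ℝ)..1, qY u)
    (ESX ESY : ℝ → ℝ)
    (hESX : ∀ p ∈ Set.Ioo (0:ℝ) 1, ESX p = (1 - p)⁻¹ * ∫ u in p..1, qX u)
    (hESY : ∀ p ∈ Set.Ioo (0:ℝ) 1, ESY p = (1 - p)⁻¹ * ∫ u in p..1, qY u)
    (θX θY : ℝ → ℝ)
    (hθX : ∀ p ∈ Set.Ioo (0:ℝ) 1, mX < qX p →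
      θX p = (1 - p) * (ESX p - qX p) / (qX p - mX))
    (hθY : ∀ p ∈ Set.Ioo (0:ℝ) 1, mY < qY p →
      θY p = (1 - p) * (ESY p - qY p) / (qY p - mY))
    (D : Set ℝ) (hD : D = {p ∈ Set.Ioo (0:ℝ) 1 | mX < qX p ∧ mY < qY p}) :
    (∀ p ∈ D, θX p ≤ θY p) ↔
      MonotoneOn (fun p => (ESY p - mY) / (ESX p - mX)) D := by
  set TX : ℝ → ℝ := fun x => (∫ u in x..1, qX u) - (1 - x) * mX with hTXdef
  set TY : ℝ → ℝ := fun x => (∫ u in x..1, qY u) - (1 - x) * mY with hTYdef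
  -- membership unfolding
  have hmem : ∀ p ∈ D, p ∈ Set.Ioo (0:ℝ) 1 ∧ mX < qX p ∧ mY < qY p := by
    intro p hp; rw [hD] at hp; exact ⟨hp.1, hp.2⟩
  -- D is open
  have hDopen : IsOpen D := by
    rw [isOpen_iff_mem_nhds]
    intro p hp
    obtain ⟨hp1, hpX, hpY⟩ := hmem p hp
    have h1 : ∀ᶠ x in nhds p, x ∈ Set.Ioo (0:ℝ) 1 := isOpen_Ioo.mem_nhds hp1
    have h2 : ∀ᶠ x in nhds p, mX < qX x :=
      ((hXc.continuousAt (isOpen_Ioo.mem_nhds hp1)).eventually_const_lt hpX)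
    have h3 : ∀ᶠ x in nhds p, mY < qY x :=
      ((hYc.continuousAt (isOpen_Ioo.mem_nhds hp1)).eventually_const_lt hpY)
    filter_upwards [h1, h2, h3] with x hx1 hx2 hx3
    rw [hD]; exact ⟨hx1, hx2, hx3⟩
  -- D is convex
  have hDconv : Convex ℝ D := by
    rw [convex_iff_ordConnected]
    constructor
    intro x hx z hz y hy
    obtain ⟨hx1, hxX, hxY⟩ := hmem x hx
    obtain ⟨hz1, -, -⟩ := hmem z hz
    have hy1 : y ∈ Set.Ioo (0:ℝ) 1 := ⟨lt_of_lt_of_le hx1.1 hy.1, lt_of_le_of_lt hy.2 hz1.2⟩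
    rw [hD]
    exact ⟨hy1, lt_of_lt_of_le hxX (hXm.monotoneOn hx1 hy1 hy.1),
      lt_of_lt_of_le hxY (hYm.monotoneOn hx1 hy1 hy.1)⟩
  -- positivity
  have hTXpos : ∀ p ∈ D, 0 < TX p := fun p hp =>
    aux_T_pos qX hXm hXi mX (hmem p hp).1 (hmem p hp).2.1
  have hTYpos : ∀ p ∈ D, 0 < TY p := fun p hp =>
    aux_T_pos qY hYm hYi mY (hmem p hp).1 (hmem p hp).2.2
  -- derivative of ratio
  have hder : ∀ p ∈ D, HasDerivAt (fun x => TY x / TX x)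
      (((qX p - mX) * TY p - (qY p - mY) * TX p) / TX p ^ 2) p := by
    intro p hp
    obtain ⟨hp1, hpX, hpY⟩ := hmem p hp
    have hdX := aux_hasDerivAt_T qX hXc hXi mX hp1
    have hdY := aux_hasDerivAt_T qY hYc hYi mY hp1
    have := (hdY.div hdX (hTXpos p hp).ne' : HasDerivAt (fun x => TY x / TX x) _ p)
    exact this.congr_deriv (by ring)
  -- identity on D : ratio function equals TY/TX
  have hratio : ∀ p ∈ D, (ESY p - mY) / (ESX p - mX) = TY p / TX p := by
    intro p hp
    obtain ⟨hp1, hpX, hpY⟩ := hmem p hp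
    have hne : (1 - p) ≠ 0 := by have := hp1.2; intro h; linarith
    have hX : ESX p - mX = (1 - p)⁻¹ * TX p := by
      rw [hESX p hp1, hTXdef]
      field_simp
    have hY : ESY p - mY = (1 - p)⁻¹ * TY p := by
      rw [hESY p hp1, hTYdef]
      field_simp
    rw [hX, hY, mul_div_mul_left _ _ (inv_ne_zero hne)]
  -- θ inequality reformulation
  have hθiff : ∀ p ∈ D, (θX p ≤ θY p ↔
      0 ≤ (qX p - mX) * TY p - (qY p - mY) * TX p) := by
    intro p hp
    obtain ⟨hp1, hpX, hpY⟩ := hmem p hp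
    have hne : (0:ℝ) < 1 - p := by have := hp1.2; linarith
    have hneX : qX p - mX ≠ 0 := by linarith
    have hneY : qY p - mY ≠ 0 := by linarith
    have hne' : (1:ℝ) - p ≠ 0 := hne.ne'
    have hXv : θX p = TX p / (qX p - mX) - (1 - p) := by
      rw [hθX p hp1 hpX, hESX p hp1, hTXdef]
      field_simp
      ring
    have hYv : θY p = TY p / (qY p - mY) - (1 - p) := by
      rw [hθY p hp1 hpY, hESY p hp1, hTYdef]
      field_simp
      ring
    rw [hXv, hYv, sub_le_sub_iff_right,
      div_le_div_iff₀ (by linarith) (by linarith)]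
    constructor <;> intro h <;> nlinarith
  constructor
  · -- θ order → monotone ratio
    intro hθ
    have hmono : MonotoneOn (fun x => TY x / TX x) D := by
      apply monotoneOn_of_deriv_nonneg hDconv
      · intro p hp
        exact ((hder p hp).differentiableAt).continuousAt.continuousWithinAt
      · intro p hp
        rw [hDopen.interior_eq] at hp
        exact ((hder p hp).differentiableAt).differentiableWithinAt
      · intro p hp
        rw [hDopen.interior_eq] at hp
        rw [(hder p hp).deriv]
        have hK : 0 ≤ (qX p - mX) * TY p - (qY p - mY) * TX p :=
          (hθiff p hp).1 (hθ p hp)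
        positivity
    exact hmono.congr (fun p hp => (hratio p hp).symm)
  · -- monotone ratio → θ order
    intro hmono p hp
    have hmono' : MonotoneOn (fun x => TY x / TX x) D :=
      hmono.congr (fun p hp => hratio p hp)
    have hd := hder p hp
    have h0 : 0 ≤ ((qX p - mX) * TY p - (qY p - mY) * TX p) / TX p ^ 2 :=
      aux_deriv_nonneg_of_monotoneOn hDopen hmono' hp hd
    have hK : 0 ≤ (qX p - mX) * TY p - (qY p - mY) * TX p := by
      have h1 := hTXpos p hp
      have h2 : (0:ℝ) < TX p ^ 2 := by positivity
      have h3 := mul_nonneg h0 h2.le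
      rwa [div_mul_cancel₀ _ h2.ne'] at h3
    exact (hθiff p hp).2 hK
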